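/- Let m ∈ ℕ, let M be a nonempty closed subset of ℝ^m, let p, q ∈ M and let c ≥ 0. If (γ_k, g_k), k ∈ ℕ, is a sequence of admissible paths from p to q in M with E(γ_k) ≤ c for every k, then there exist a subsequence (γ_{k_j}, g_{k_j}) and an admissible path (γ, g) from p to q in M such that γ_{k_j} → γ uniformly on [0,1] and E(γ) ≤ c. -/

import Mathlib

open MeasureTheory Set Filter Topology
open scoped RealInnerProductSpace ENNReal

theorem weak_compact_aux {F : Type*} [NormedAddCommGroup F] [InnerProductSpace ℝ F]
    [CompleteSpace F] {ι : Type*} [Countable ι]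
    (R : ℝ) (G : ℕ → F) (hG : ∀ k, ‖G k‖ ≤ R) (h : ι → F) :
    ∃ φ : ℕ → ℕ, StrictMono φ ∧ ∃ G₀ : F, ‖G₀‖ ≤ R ∧
      (∀ n, Tendsto (fun j => ⟪G (φ j), h n⟫) atTop (𝓝 ⟪G₀, h n⟫)) ∧
      Tendsto (fun j => ⟪G (φ j), G₀⟫) atTop (𝓝 (‖G₀‖ ^ 2)) := by
  have hR : 0 ≤ R := le_trans (norm_nonneg _) (hG 0)
  -- extract subsequence along which inner products with all `h n` converge
  set s : Set (ι → ℝ) := Set.univ.pi fun n => Icc (-(R * ‖h n‖)) (R * ‖h n‖) with hs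
  have hscompact : IsCompact s := isCompact_univ_pi fun n => isCompact_Icc
  have hmem : ∀ k, (fun n => ⟪G k, h n⟫) ∈ s := by
    intro k
    refine Set.mem_univ_pi.2 fun n => ?_
    have hb : |⟪G k, h n⟫| ≤ R * ‖h n‖ :=
      (abs_real_inner_le_norm (G k) (h n)).trans
        (mul_le_mul_of_nonneg_right (hG k) (norm_nonneg _))
    exact abs_le.1 hb
  obtain ⟨a, -, φ, hφ, ha⟩ := hscompact.tendsto_subseq hmem
  rw [tendsto_pi_nhds] at ha
  refine ⟨φ, hφ, ?_⟩
  -- convergence on the span of the `h n`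
  set S : Submodule ℝ F := Submodule.span ℝ (Set.range h) with hS
  have hspan : ∀ y ∈ S, ∃ L : ℝ, Tendsto (fun j => ⟪G (φ j), y⟫) atTop (𝓝 L) := by
    intro y hy
    induction hy using Submodule.span_induction with
    | mem x hx =>
      obtain ⟨n, rfl⟩ := hx
      exact ⟨a n, ha n⟩
    | zero => exact ⟨0, by simpa [inner_zero_right] using tendsto_const_nhds⟩
    | add x y _ _ hx hy =>
      obtain ⟨Lx, hLx⟩ := hx; obtain ⟨Ly, hLy⟩ := hy
      exact ⟨Lx + Ly, by simpa [inner_add_right] using hLx.add hLy⟩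
    | smul c x _ hx =>
      obtain ⟨Lx, hLx⟩ := hx
      exact ⟨c * Lx, by simpa [real_inner_smul_right] using hLx.const_mul c⟩
  -- Cauchy on the closure
  set K : Submodule ℝ F := S.topologicalClosure with hK
  haveI : CompleteSpace K := S.isClosed_topologicalClosure.completeSpace_coe
  have hcauchy : ∀ x : K, ∃ L : ℝ, Tendsto (fun j => ⟪G (φ j), (x : F)⟫) atTop (𝓝 L) := by
    intro x
    have hC : CauchySeq (fun j => ⟪G (φ j), (x : F)⟫) := by
      rw [Metric.cauchySeq_iff]
      intro ε hε
      have hx : (x : F) ∈ closure (S : Set F) := x.2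
      obtain ⟨y, hyS, hxy⟩ := Metric.mem_closure_iff.1 hx (ε / (3 * (R + 1)))
        (by positivity)
      obtain ⟨L, hL⟩ := hspan y hyS
      have hLC : CauchySeq (fun j => ⟪G (φ j), y⟫) := hL.cauchySeq
      rw [Metric.cauchySeq_iff] at hLC
      obtain ⟨N, hN⟩ := hLC (ε / 3) (by positivity)
      refine ⟨N, fun j hj i hi => ?_⟩
      have key : ∀ k, |⟪G k, (x : F)⟫ - ⟪G k, y⟫| ≤ ε / 3 := by
        intro k
        rw [← inner_sub_right]
        refine (abs_real_inner_le_norm _ _).trans ?_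
        have h1 : ‖G k‖ * ‖(x : F) - y‖ ≤ R * (ε / (3 * (R + 1))) := by
          refine mul_le_mul (hG k) ?_ (norm_nonneg _) hR
          rw [← dist_eq_norm]
          exact le_of_lt hxy
        refine h1.trans ?_
        rw [mul_comm, div_mul_eq_mul_div, div_le_div_iff₀ (by positivity) (by positivity)]
        nlinarith [hR, hε.le]
      have h2 := hN j hj i hi
      have d1 := key (φ j); have d2 := key (φ i)
      rw [Real.dist_eq] at h2 ⊢
      have : ⟪G (φ j), (x:F)⟫ - ⟪G (φ i), (x:F)⟫
          = (⟪G (φ j), (x:F)⟫ - ⟪G (φ j), y⟫) + (⟪G (φ j), y⟫ - ⟪G (φ i), y⟫)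
            + (⟪G (φ i), y⟫ - ⟪G (φ i), (x:F)⟫) := by ring
      rw [this]
      calc |_ + _ + _| ≤ |⟪G (φ j), (x:F)⟫ - ⟪G (φ j), y⟫| + |⟪G (φ j), y⟫ - ⟪G (φ i), y⟫|
            + |⟪G (φ i), y⟫ - ⟪G (φ i), (x:F)⟫| := by
              exact (abs_add_le _ _).trans (by gcongr; exact abs_add_le _ _)
        _ < ε := by
              rw [abs_sub_comm] at d2
              linarith
    exact cauchySeq_tendsto_of_complete hC
  choose L hL using hcauchy
  -- the limit functional is linear and bounded
  have hLadd : ∀ x y : K, L (x + y) = L x + L y := by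
    intro x y
    refine tendsto_nhds_unique (hL (x + y)) ?_
    simpa [inner_add_right] using (hL x).add (hL y)
  have hLsmul : ∀ (c : ℝ) (x : K), L (c • x) = c * L x := by
    intro c x
    refine tendsto_nhds_unique (hL (c • x)) ?_
    simpa [real_inner_smul_right] using (hL x).const_mul c
  have hLbound : ∀ x : K, |L x| ≤ R * ‖x‖ := by
    intro x
    refine le_of_tendsto ((hL x).abs) (Eventually.of_forall fun j => ?_)
    exact (abs_real_inner_le_norm _ _).trans
      (mul_le_mul_of_nonneg_right (hG (φ j)) (norm_nonneg _))
  let f : K →ₗ[ℝ] ℝ := { toFun := L, map_add' := hLadd, map_smul' := hLsmul }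
  let fC : K →L[ℝ] ℝ := f.mkContinuous R (fun x => by exact hLbound x)
  -- Riesz representation
  set G₀' : K := (InnerProductSpace.toDual ℝ K).symm fC with hG₀'
  have hG₀'app : ∀ x : K, ⟪(G₀' : F), (x : F)⟫ = L x := by
    intro x
    have h1 : ⟪G₀', x⟫ = fC x := InnerProductSpace.toDual_symm_apply
    rw [Submodule.coe_inner] at h1
    exact h1
  refine ⟨(G₀' : F), ?_, ?_, ?_⟩
  · have h1 : ‖G₀'‖ ≤ R := by
      rw [hG₀', (InnerProductSpace.toDual ℝ K).symm.norm_map]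
      exact f.mkContinuous_norm_le hR (fun x => by exact hLbound x)
    simpa using h1
  · intro n
    have hnK : h n ∈ K := S.le_topologicalClosure (Submodule.subset_span ⟨n, rfl⟩)
    have := hL ⟨h n, hnK⟩
    rw [show ⟪(G₀' : F), h n⟫ = L ⟨h n, hnK⟩ from hG₀'app ⟨h n, hnK⟩]
    exact this
  · have := hL G₀'
    rw [show L G₀' = ⟪(G₀' : F), (G₀' : F)⟫ from (hG₀'app G₀').symm] at this
    simpa [real_inner_self_eq_norm_sq] using this

variable {α : Type*} {mα : MeasurableSpace α} {μ : Measure α}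
variable {E : Type*} [NormedAddCommGroup E] [InnerProductSpace ℝ E] [CompleteSpace E]

theorem integral_norm_sq_eq (f : Lp E 2 μ) : ∫ a, ‖f a‖ ^ 2 ∂μ = ‖f‖ ^ 2 := by
  have h := L2.inner_def (𝕜 := ℝ) f f
  rw [real_inner_self_eq_norm_sq] at h
  rw [h]
  apply integral_congr_ae
  filter_upwards [] with a
  rw [real_inner_self_eq_norm_sq]

/-- Cauchy-Schwarz bound for the integral of an `L²` function over a set. -/
theorem norm_setIntegral_le_sqrt (f : Lp E 2 μ) {s : Set α} (hs : MeasurableSet s)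
    (hμs : μ s ≠ ∞) :
    ‖∫ x in s, f x ∂μ‖ ≤ ‖f‖ * Real.sqrt (μ s).toReal := by
  set v : E := ∫ x in s, f x ∂μ with hv
  have h1 : ⟪indicatorConstLp 2 hs hμs v, f⟫ = ⟪v, v⟫ :=
    L2.inner_indicatorConstLp_eq_inner_setIntegral ℝ hs hμs v f
  have h2 : ‖v‖ ^ 2 ≤ ‖indicatorConstLp 2 hs hμs v‖ * ‖f‖ := by
    rw [← real_inner_self_eq_norm_sq, ← h1]
    exact real_inner_le_norm _ _
  have h3 : ‖indicatorConstLp 2 hs hμs v‖ = ‖v‖ * Real.sqrt (μ s).toReal := by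
    rw [norm_indicatorConstLp (by norm_num) (by norm_num)]
    congr 1
    rw [Real.sqrt_eq_rpow]
    norm_num
    rfl
  rcases eq_or_ne v 0 with h | h
  · rw [h]
    simp only [norm_zero]
    positivity
  · have hvpos : 0 < ‖v‖ := norm_pos_iff.2 h
    rw [h3] at h2
    refine le_of_mul_le_mul_left ?_ hvpos
    nlinarith [h2]

/-- Pointwise convergence on rationals plus a uniform Hölder-type modulus gives
uniform convergence on `[0,1]`. -/
theorem tendstoUniformlyOn_of_holder {E : Type*} [NormedAddCommGroup E]
    (C : ℝ) (hC : 0 ≤ C) (u : ℕ → ℝ → E) (v : ℝ → E)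
    (hu : ∀ j, ∀ x ∈ Icc (0:ℝ) 1, ∀ y ∈ Icc (0:ℝ) 1, x ≤ y →
      ‖u j y - u j x‖ ≤ C * Real.sqrt (y - x))
    (hv : ∀ x ∈ Icc (0:ℝ) 1, ∀ y ∈ Icc (0:ℝ) 1, x ≤ y →
      ‖v y - v x‖ ≤ C * Real.sqrt (y - x))
    (hp : ∀ r : ℚ, (r : ℝ) ∈ Icc (0:ℝ) 1 →
      Tendsto (fun j => u j (r : ℝ)) atTop (𝓝 (v (r : ℝ)))) :
    TendstoUniformlyOn u v atTop (Icc 0 1) := by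
  rw [Metric.tendstoUniformlyOn_iff]
  intro ε hε
  set δ : ℝ := (ε / (4 * (C + 1))) ^ 2 with hδdef
  have hδ : 0 < δ := by positivity
  obtain ⟨n, hn⟩ := exists_nat_one_div_lt hδ
  set N : ℕ := n + 1 with hN
  have hNpos : (0:ℝ) < N := by positivity
  have hmod : C * Real.sqrt (1 / N) < ε / 4 := by
    have h1 : Real.sqrt (1 / N) < Real.sqrt δ := by
      apply Real.sqrt_lt_sqrt (by positivity)
      exact_mod_cast hn
    have h2 : Real.sqrt δ = ε / (4 * (C + 1)) := Real.sqrt_sq (by positivity)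
    have h3 : C * Real.sqrt (1 / N) < C * Real.sqrt δ + Real.sqrt δ := by
      nlinarith [Real.sqrt_nonneg (1 / (N:ℝ)), Real.sqrt_nonneg δ, h1]
    rw [h2] at h3
    refine h3.trans_le ?_
    have heq : C * (ε / (4 * (C + 1))) + ε / (4 * (C + 1)) = ε / 4 := by
      field_simp
    rw [heq]
  -- rational grid
  have hgrid : ∀ i : Fin (N + 1), ((((i : ℚ)) / (N : ℚ) : ℚ) : ℝ) ∈ Icc (0:ℝ) 1 := by
    intro i
    have hi : (i : ℝ) ≤ N := by
      have := i.isLt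
      exact_mod_cast Nat.lt_succ_iff.1 this
    push_cast
    constructor
    · positivity
    · rw [div_le_one (by positivity)]
      linarith [hi, (by rw [hN]; push_cast; ring : ((N:ℕ):ℝ) = (n:ℝ) + 1)]
  have hev : ∀ᶠ j in atTop, ∀ i : Fin (N + 1),
      dist (u j ((((i : ℚ)) / (N : ℚ) : ℚ) : ℝ)) (v ((((i : ℚ)) / (N : ℚ) : ℚ) : ℝ)) < ε / 4 := by
    rw [eventually_all]
    intro i
    have := hp ((i : ℚ) / (N : ℚ)) (hgrid i)
    exact Metric.tendsto_nhds.1 this (ε / 4) (by positivity)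
  filter_upwards [hev] with j hj x hx
  -- choose grid point below x
  set i : ℕ := ⌊x * N⌋₊ with hi
  have hiN : i ≤ N := by
    apply Nat.floor_le_of_le
    calc x * N ≤ 1 * N := by nlinarith [hx.2, hNpos]
      _ = N := one_mul _
  have hifin : (⟨i, Nat.lt_succ_of_le hiN⟩ : Fin (N + 1)) = ⟨i, Nat.lt_succ_of_le hiN⟩ := rfl
  set r : ℝ := (i : ℝ) / N with hr
  have hrx : r ≤ x := by
    rw [hr, div_le_iff₀ hNpos]
    exact Nat.floor_le (by nlinarith [hx.1, hNpos])
  have hxr : x - r ≤ 1 / N := by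
    have h4 : x * N < (i:ℝ) + 1 := by
      have := Nat.lt_floor_add_one (x * N)
      exact_mod_cast this
    rw [hr, sub_le_iff_le_add, ← add_div, le_div_iff₀ hNpos]
    linarith
  have hxr0 : 0 ≤ x - r := by linarith
  have hgr : r ∈ Icc (0:ℝ) 1 := by
    constructor
    · rw [hr]; positivity
    · rw [hr, div_le_one hNpos]
      exact_mod_cast hiN
  have hcast : ((((i:ℚ)) / (N:ℚ) : ℚ) : ℝ) = r := by
    rw [hr]; push_cast; ring
  have e1 : dist (v x) (v r) ≤ C * Real.sqrt (x - r) := by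
    rw [dist_eq_norm]; exact hv r hgr x hx hrx
  have e3 : dist (u j r) (u j x) ≤ C * Real.sqrt (x - r) := by
    rw [dist_comm, dist_eq_norm]; exact hu j r hgr x hx hrx
  have emod : C * Real.sqrt (x - r) ≤ C * Real.sqrt (1 / N) :=
    mul_le_mul_of_nonneg_left (Real.sqrt_le_sqrt hxr) hC
  have e2 : dist (u j r) (v r) < ε / 4 := by
    have := hj ⟨i, Nat.lt_succ_of_le hiN⟩
    simpa only [hcast] using this
  calc dist (v x) (u j x) ≤ dist (v x) (v r) + dist (v r) (u j r) + dist (u j r) (u j x) :=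
        dist_triangle4 _ _ _ _
    _ < ε := by
        rw [dist_comm (v r)]
        linarith

/-- `(γ, g)` is an admissible path from `p` to `q` in `M ⊆ ℝ^m`:
`γ` is continuous on `[0,1]`, `g ∈ L²([0,1], ℝ^m)`,
`γ t = p + ∫₀ᵗ g` on `[0,1]`, `γ 1 = q` and `γ` stays in `M`. -/
def IsAdmissiblePath {m : ℕ} (M : Set (EuclideanSpace ℝ (Fin m)))
    (p q : EuclideanSpace ℝ (Fin m))
    (γ g : ℝ → EuclideanSpace ℝ (Fin m)) : Prop :=
  ContinuousOn γ (Icc 0 1) ∧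
  MemLp g 2 (volume.restrict (Icc (0:ℝ) 1)) ∧
  (∀ t ∈ Icc (0:ℝ) 1, γ t = p + ∫ s in (0:ℝ)..t, g s) ∧
  γ 1 = q ∧
  ∀ t ∈ Icc (0:ℝ) 1, γ t ∈ M

/-- The energy of an admissible path. -/
noncomputable def pathEnergy {m : ℕ} (g : ℝ → EuclideanSpace ℝ (Fin m)) : ℝ :=
  ∫ s in Icc (0:ℝ) 1, ‖g s‖ ^ 2

/-- Compactness of energy sublevels: from a sequence of admissible paths from `p` to `q` in a
nonempty closed set `M ⊆ ℝ^m` with energies bounded by `c`, one can extract a subsequence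
converging uniformly on `[0,1]` to an admissible path of energy at most `c`. -/
theorem energy_sublevel_compact {m : ℕ} (M : Set (EuclideanSpace ℝ (Fin m)))
    (hM : M.Nonempty) (hMclosed : IsClosed M)
    (p q : EuclideanSpace ℝ (Fin m)) (hp : p ∈ M) (hq : q ∈ M) (c : ℝ) (hc : 0 ≤ c)
    (γ g : ℕ → ℝ → EuclideanSpace ℝ (Fin m))
    (hadm : ∀ k, IsAdmissiblePath M p q (γ k) (g k))
    (hE : ∀ k, pathEnergy (g k) ≤ c) :
    ∃ (k : ℕ → ℕ) (γ₀ g₀ : ℝ → EuclideanSpace ℝ (Fin m)),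
      StrictMono k ∧
      IsAdmissiblePath M p q γ₀ g₀ ∧
      TendstoUniformlyOn (fun j => γ (k j)) γ₀ atTop (Icc 0 1) ∧
      pathEnergy g₀ ≤ c := by
  set ν : Measure ℝ := volume.restrict (Icc (0:ℝ) 1) with hν
  haveI : IsFiniteMeasure ν := by
    constructor
    rw [hν, Measure.restrict_apply_univ, Real.volume_Icc]
    exact ENNReal.ofReal_lt_top
  have hmem : ∀ k, MemLp (g k) 2 ν := fun k => (hadm k).2.1
  set G : ℕ → Lp (EuclideanSpace ℝ (Fin m)) 2 ν := fun k => (hmem k).toLp (g k) with hG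
  have hGcoe : ∀ k, ⇑(G k) =ᵐ[ν] g k := fun k => (hmem k).coeFn_toLp
  have hGnorm : ∀ k, ‖G k‖ ≤ Real.sqrt c := by
    intro k
    rw [← Real.sqrt_sq (norm_nonneg (G k))]
    apply Real.sqrt_le_sqrt
    rw [← integral_norm_sq_eq (G k)]
    have heq : ∫ a, ‖G k a‖ ^ 2 ∂ν = ∫ a, ‖g k a‖ ^ 2 ∂ν :=
      integral_congr_ae ((hGcoe k).mono fun a ha => by simp only [ha])
    rw [heq]
    simpa [pathEnergy, hν] using hE k
  -- the test family: vector-valued indicators of intervals `(0, r]` with rational `r`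
  set h : ℚ × Fin m → Lp (EuclideanSpace ℝ (Fin m)) 2 ν := fun ri =>
    indicatorConstLp 2 measurableSet_Ioc (measure_ne_top ν (Ioc (0:ℝ) (ri.1 : ℝ)))
      (EuclideanSpace.single ri.2 1) with hh
  obtain ⟨φ, hφ, G₀, hG₀norm, hG₀tend, -⟩ := weak_compact_aux (Real.sqrt c) G hGnorm h
  -- basic integrability
  have hInt0 : Integrable (⇑G₀) ν := (Lp.memLp G₀).integrable (by norm_num)
  have hIntk : ∀ k, Integrable (⇑(G k)) ν := fun k => (Lp.memLp (G k)).integrable (by norm_num)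
  -- measure rewriting
  have hres : ∀ {a b : ℝ}, 0 ≤ a → b ≤ 1 → ν.restrict (Ioc a b) = volume.restrict (Ioc a b) := by
    intro a b ha hb
    rw [hν, Measure.restrict_restrict measurableSet_Ioc]
    congr 1
    rw [inter_eq_self_of_subset_left]
    exact fun x hx => ⟨le_trans ha (le_of_lt hx.1), le_trans hx.2 hb⟩
  have hII : ∀ (f : ℝ → EuclideanSpace ℝ (Fin m)) (t : ℝ), t ∈ Icc (0:ℝ) 1 →
      ∫ s in (0:ℝ)..t, f s = ∫ s in Ioc (0:ℝ) t, f s ∂ν := by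
    intro f t ht
    rw [intervalIntegral.integral_of_le ht.1, hres le_rfl ht.2]
  -- difference formulas
  have hdiffk : ∀ k, ∀ x ∈ Icc (0:ℝ) 1, ∀ y ∈ Icc (0:ℝ) 1, x ≤ y →
      γ k y - γ k x = ∫ s in Ioc x y, (G k) s ∂ν := by
    intro k x hx y hy hxy
    have hae : ∀ t, t ∈ Icc (0:ℝ) 1 →
        ∫ s in (0:ℝ)..t, g k s = ∫ s in Ioc (0:ℝ) t, (G k) s ∂ν := by
      intro t ht
      rw [hII (g k) t ht]
      exact integral_congr_ae (ae_restrict_of_ae ((hGcoe k).symm.mono fun a ha => by simp only [ha]))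
    rw [(hadm k).2.2.1 x hx, (hadm k).2.2.1 y hy, hae x hx, hae y hy,
      add_sub_add_left_eq_sub, ← Ioc_union_Ioc_eq_Ioc hx.1 hxy,
      setIntegral_union (Ioc_disjoint_Ioc_of_le le_rfl) measurableSet_Ioc
        ((hIntk k).integrableOn) ((hIntk k).integrableOn)]
    abel
  -- the limit curve
  set g₀ : ℝ → EuclideanSpace ℝ (Fin m) := ⇑G₀ with hg₀
  set γ₀ : ℝ → EuclideanSpace ℝ (Fin m) := fun t => p + ∫ s in (0:ℝ)..t, g₀ s with hγ₀
  have hdiff0 : ∀ x ∈ Icc (0:ℝ) 1, ∀ y ∈ Icc (0:ℝ) 1, x ≤ y →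
      γ₀ y - γ₀ x = ∫ s in Ioc x y, G₀ s ∂ν := by
    intro x hx y hy hxy
    rw [hγ₀]
    simp only
    rw [hII g₀ x hx, hII g₀ y hy, add_sub_add_left_eq_sub,
      ← Ioc_union_Ioc_eq_Ioc hx.1 hxy,
      setIntegral_union (Ioc_disjoint_Ioc_of_le le_rfl) measurableSet_Ioc
        hInt0.integrableOn hInt0.integrableOn]
    abel
  -- Hölder-1/2 estimates
  have hmeas_le : ∀ {x y : ℝ}, 0 ≤ x → y ≤ 1 → x ≤ y →
      Real.sqrt (ν (Ioc x y)).toReal ≤ Real.sqrt (y - x) := by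
    intro x y hx hy hxy
    apply Real.sqrt_le_sqrt
    apply ENNReal.toReal_le_of_le_ofReal (by linarith)
    calc ν (Ioc x y) ≤ volume (Ioc x y) := Measure.restrict_le_self _
      _ = ENNReal.ofReal (y - x) := Real.volume_Ioc
  have hboundInt : ∀ (f : Lp (EuclideanSpace ℝ (Fin m)) 2 ν), ‖f‖ ≤ Real.sqrt c →
      ∀ x ∈ Icc (0:ℝ) 1, ∀ y ∈ Icc (0:ℝ) 1, x ≤ y →
      ‖∫ s in Ioc x y, f s ∂ν‖ ≤ Real.sqrt c * Real.sqrt (y - x) := by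
    intro f hf x hx y hy hxy
    refine (norm_setIntegral_le_sqrt f measurableSet_Ioc (measure_ne_top ν _)).trans ?_
    exact mul_le_mul hf (hmeas_le hx.1 hy.2 hxy) (Real.sqrt_nonneg _) (Real.sqrt_nonneg _)
  have hholdk : ∀ j, ∀ x ∈ Icc (0:ℝ) 1, ∀ y ∈ Icc (0:ℝ) 1, x ≤ y →
      ‖γ (φ j) y - γ (φ j) x‖ ≤ Real.sqrt c * Real.sqrt (y - x) := by
    intro j x hx y hy hxy
    rw [hdiffk (φ j) x hx y hy hxy]
    exact hboundInt (G (φ j)) (hGnorm (φ j)) x hx y hy hxy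
  have hhold0 : ∀ x ∈ Icc (0:ℝ) 1, ∀ y ∈ Icc (0:ℝ) 1, x ≤ y →
      ‖γ₀ y - γ₀ x‖ ≤ Real.sqrt c * Real.sqrt (y - x) := by
    intro x hx y hy hxy
    rw [hdiff0 x hx y hy hxy]
    exact hboundInt G₀ hG₀norm x hx y hy hxy
  -- pointwise convergence at rational points
  have hkey : ∀ (f : Lp (EuclideanSpace ℝ (Fin m)) 2 ν) (r : ℚ) (i : Fin m),
      ⟪f, h (r, i)⟫ = (∫ s in Ioc (0:ℝ) (r:ℝ), f s ∂ν) i := by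
    intro f r i
    rw [real_inner_comm, hh]
    simp only
    rw [L2.inner_indicatorConstLp_eq_inner_setIntegral ℝ measurableSet_Ioc
      (measure_ne_top ν _) (EuclideanSpace.single i 1) f,
      EuclideanSpace.inner_single_left]
    simp
  have hpt : ∀ r : ℚ, (r : ℝ) ∈ Icc (0:ℝ) 1 →
      Tendsto (fun j => γ (φ j) (r : ℝ)) atTop (𝓝 (γ₀ (r : ℝ))) := by
    intro r hr
    have hco : ∀ i : Fin m, Tendsto (fun j => (∫ s in Ioc (0:ℝ) (r:ℝ), (G (φ j)) s ∂ν) i)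
        atTop (𝓝 ((∫ s in Ioc (0:ℝ) (r:ℝ), G₀ s ∂ν) i)) := by
      intro i
      have := hG₀tend (r, i)
      simpa only [hkey] using this
    -- assemble coordinatewise convergence into vector convergence
    have hvec : Tendsto (fun j => ∫ s in Ioc (0:ℝ) (r:ℝ), (G (φ j)) s ∂ν)
        atTop (𝓝 (∫ s in Ioc (0:ℝ) (r:ℝ), G₀ s ∂ν)) := by
      set e := EuclideanSpace.equiv (Fin m) ℝ with he
      have h1 : Tendsto (fun j => e (∫ s in Ioc (0:ℝ) (r:ℝ), (G (φ j)) s ∂ν))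
          atTop (𝓝 (e (∫ s in Ioc (0:ℝ) (r:ℝ), G₀ s ∂ν))) := by
        rw [tendsto_pi_nhds]
        intro i
        exact hco i
      have h2 := ((e.symm : (Fin m → ℝ) →L[ℝ] EuclideanSpace ℝ (Fin m)).continuous.tendsto
        _).comp h1
      simpa [Function.comp_def] using h2
    have hγeq : ∀ j, γ (φ j) (r : ℝ) = p + ∫ s in Ioc (0:ℝ) (r:ℝ), (G (φ j)) s ∂ν := by
      intro j
      rw [(hadm (φ j)).2.2.1 _ hr, hII (g (φ j)) _ hr]
      congr 1
      exact integral_congr_ae (ae_restrict_of_ae ((hGcoe (φ j)).symm.mono fun a ha => by simp only [ha]))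
    have hγ₀eq : γ₀ (r : ℝ) = p + ∫ s in Ioc (0:ℝ) (r:ℝ), G₀ s ∂ν := by
      rw [hγ₀]
      simp only
      rw [hII g₀ _ hr]
    simp only [hγeq, hγ₀eq]
    exact tendsto_const_nhds.add hvec
  -- uniform convergence
  have hUnif : TendstoUniformlyOn (fun j => γ (φ j)) γ₀ atTop (Icc 0 1) :=
    tendstoUniformlyOn_of_holder (Real.sqrt c) (Real.sqrt_nonneg c)
      (fun j => γ (φ j)) γ₀ hholdk hhold0 hpt
  -- conclude
  have hptAll : ∀ t ∈ Icc (0:ℝ) 1, Tendsto (fun j => γ (φ j) t) atTop (𝓝 (γ₀ t)) :=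
    fun t ht => hUnif.tendsto_at ht
  refine ⟨φ, γ₀, g₀, hφ, ⟨?_, ?_, fun t ht => rfl, ?_, ?_⟩, hUnif, ?_⟩
  · -- continuity
    have hIntOn : IntegrableOn g₀ (Icc (0:ℝ) 1) volume := hInt0
    have hcont := (continuousOn_const (c := p)).add (intervalIntegral.continuousOn_primitive hIntOn)
    refine hcont.congr fun t ht => ?_
    rw [hγ₀]
    simp only
    rw [intervalIntegral.integral_of_le ht.1]
    rfl
  · exact Lp.memLp G₀
  · -- endpoint
    have h1 : Tendsto (fun j => γ (φ j) 1) atTop (𝓝 (γ₀ 1)) := hptAll 1 (by norm_num)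
    have h2 : (fun j => γ (φ j) 1) = fun _ => q := funext fun j => (hadm (φ j)).2.2.2.1
    rw [h2] at h1
    exact tendsto_nhds_unique h1 tendsto_const_nhds
  · -- stays in M
    intro t ht
    exact hMclosed.mem_of_tendsto (hptAll t ht)
      (Eventually.of_forall fun j => (hadm (φ j)).2.2.2.2 t ht)
  · -- energy bound
    have h1 : pathEnergy g₀ = ‖G₀‖ ^ 2 := by
      rw [pathEnergy, ← hν]
      exact integral_norm_sq_eq G₀
    rw [h1, ← Real.sq_sqrt hc]
    exact pow_le_pow_left₀ (norm_nonneg _) hG₀norm 2
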